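/- Let E be a Hilbert space, B its closed unit ball, and G : E → ℝ a C¹ function such that for every δ > 0 there is a finite-dimensional subspace F_δ ⊆ E with |DG(v)[h]| ≤ δ‖h‖ for all v ∈ B and all h ⊥ F_δ. Then for the orthogonal projection P_δ onto F_δ one has |G(v) − G(P_δ v)| ≤ δ for all v ∈ B, and consequently G restricted to B is sequentially continuous for the weak topology of E. -/

import Mathlib

open Real
open scoped RealInnerProductSpace

theorem stmt16 {E : Type*} [NormedAddCommGroup E] [InnerProductSpace ℝ E]
    [CompleteSpace E]
    (G : E → ℝ) (hG : ContDiff ℝ 1 G)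
    (happrox : ∀ δ > (0:ℝ), ∃ F : Submodule ℝ E, FiniteDimensional ℝ F ∧
      ∀ v : E, ‖v‖ ≤ 1 → ∀ h ∈ Fᗮ, |fderiv ℝ G v h| ≤ δ * ‖h‖) :
    (∀ δ > (0:ℝ), ∀ F : Submodule ℝ E, FiniteDimensional ℝ F →
      (∀ v : E, ‖v‖ ≤ 1 → ∀ h ∈ Fᗮ, |fderiv ℝ G v h| ≤ δ * ‖h‖) →
      ∀ P : E →L[ℝ] E, (∀ v, P v ∈ F) → (∀ v, v - P v ∈ Fᗮ) →
      ∀ v : E, ‖v‖ ≤ 1 → |G v - G (P v)| ≤ δ) ∧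
    (∀ (v : ℕ → E) (v₀ : E), (∀ n, ‖v n‖ ≤ 1) → ‖v₀‖ ≤ 1 →
      (∀ f : E →L[ℝ] ℝ, Filter.Tendsto (fun n => f (v n)) Filter.atTop (nhds (f v₀))) →
      Filter.Tendsto (fun n => G (v n)) Filter.atTop (nhds (G v₀))) := by
  have key : ∀ δ > (0:ℝ), ∀ F : Submodule ℝ E, FiniteDimensional ℝ F →
      (∀ v : E, ‖v‖ ≤ 1 → ∀ h ∈ Fᗮ, |fderiv ℝ G v h| ≤ δ * ‖h‖) →
      ∀ P : E →L[ℝ] E, (∀ v, P v ∈ F) → (∀ v, v - P v ∈ Fᗮ) →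
      ∀ v : E, ‖v‖ ≤ 1 → |G v - G (P v)| ≤ δ := by
    intro δ hδ F _ hF P hPmem hPorth v hv
    set w : E := v - P v with hw
    have horth : w ∈ Fᗮ := hPorth v
    have hinner : ∀ t : ℝ, (inner ℝ (P v) (t • w) : ℝ) = 0 := by
      intro t
      have h0 := (Submodule.mem_orthogonal F w).mp horth (P v) (hPmem v)
      rw [inner_smul_right, h0, mul_zero]
    have hsq : ∀ t : ℝ, ‖P v + t • w‖ ^ 2 = ‖P v‖ ^ 2 + t ^ 2 * ‖w‖ ^ 2 := by
      intro t
      rw [norm_add_sq_real, hinner t, norm_smul, Real.norm_eq_abs, mul_pow, sq_abs]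
      ring
    have hveq : ‖v‖ ^ 2 = ‖P v‖ ^ 2 + ‖w‖ ^ 2 := by
      have h1 := hsq 1
      have h2 : P v + (1:ℝ) • w = v := by rw [one_smul, hw]; abel
      rw [h2] at h1
      simpa using h1
    have hwle : ‖w‖ ≤ 1 := by
      nlinarith [norm_nonneg w, norm_nonneg (P v), norm_nonneg v]
    have hnorm : ∀ t : ℝ, t ∈ Set.Icc (0:ℝ) 1 → ‖P v + t • w‖ ≤ 1 := by
      intro t ht
      have h2 : ‖P v + t • w‖ ^ 2 ≤ 1 := by
        rw [hsq t]
        have ht2 : t ^ 2 ≤ 1 := by nlinarith [ht.1, ht.2]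
        have hb : t ^ 2 * ‖w‖ ^ 2 ≤ ‖w‖ ^ 2 := mul_le_of_le_one_left (sq_nonneg ‖w‖) ht2
        nlinarith [norm_nonneg v]
      nlinarith [norm_nonneg (P v + t • w)]
    -- derivative of the path
    set g : ℝ → ℝ := fun t => G (P v + t • w) with hg
    have hderiv : ∀ t ∈ Set.Icc (0:ℝ) 1,
        HasDerivWithinAt g (fderiv ℝ G (P v + t • w) w) (Set.Icc 0 1) t := by
      intro t _
      have hc : HasDerivAt (fun t : ℝ => P v + t • w) w t := by
        simpa using ((hasDerivAt_id t).smul_const w).const_add (P v)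
      exact ((hG.differentiable one_ne_zero (P v + t • w)).hasFDerivAt.comp_hasDerivAt t
        hc).hasDerivWithinAt
    have hbound : ∀ t ∈ Set.Icc (0:ℝ) 1, ‖fderiv ℝ G (P v + t • w) w‖ ≤ δ := by
      intro t ht
      have := hF (P v + t • w) (hnorm t ht) w horth
      rw [Real.norm_eq_abs]
      calc |fderiv ℝ G (P v + t • w) w| ≤ δ * ‖w‖ := this
        _ ≤ δ * 1 := by exact mul_le_mul_of_nonneg_left hwle hδ.le
        _ = δ := mul_one δ
    have := (convex_Icc (0:ℝ) 1).norm_image_sub_le_of_norm_hasDerivWithin_le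
      hderiv hbound (Set.left_mem_Icc.mpr zero_le_one) (Set.right_mem_Icc.mpr zero_le_one)
    simp only [hg] at this
    have hg1 : P v + (1:ℝ) • w = v := by rw [one_smul, hw]; abel
    have hg0 : P v + (0:ℝ) • w = P v := by rw [zero_smul, add_zero]
    rw [hg1, hg0] at this
    simpa using this
  refine ⟨key, ?_⟩
  intro v v₀ hv hv₀ hweak
  rw [Metric.tendsto_atTop]
  intro ε hε
  obtain ⟨F, hFfin, hF⟩ := happrox (ε/3) (by positivity)
  haveI := hFfin
  haveI : CompleteSpace F := FiniteDimensional.complete ℝ F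
  set P : E →L[ℝ] E := F.subtypeL.comp (F.orthogonalProjectionOnto) with hP
  have hPmem : ∀ u, P u ∈ F := fun u => (F.orthogonalProjectionOnto u).2
  have hPorth : ∀ u, u - P u ∈ Fᗮ := fun u => Submodule.sub_starProjection_mem_orthogonal (K := F) u
  have h1 : ∀ n, |G (v n) - G (P (v n))| ≤ ε/3 :=
    fun n => key (ε/3) (by positivity) F hFfin hF P hPmem hPorth (v n) (hv n)
  have h0 : |G v₀ - G (P v₀)| ≤ ε/3 :=
    key (ε/3) (by positivity) F hFfin hF P hPmem hPorth v₀ hv₀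
  -- P (v n) → P v₀ in norm
  let b := stdOrthonormalBasis ℝ F
  have hPsum : ∀ u : E, P u = ∑ i, (inner ℝ ((b i : E)) u : ℝ) • (b i : E) := by
    intro u
    have := b.orthogonalProjectionOnto_apply_eq_sum u
    have h2 : P u = ((F.orthogonalProjectionOnto u : F) : E) := rfl
    rw [h2, this]
    push_cast
    rfl
  have hPt : Filter.Tendsto (fun n => P (v n)) Filter.atTop (nhds (P v₀)) := by
    simp only [hPsum]
    exact tendsto_finset_sum _ fun i _ =>
      ((hweak (innerSL ℝ (b i : E))).smul_const (b i : E))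
  have hGPt : Filter.Tendsto (fun n => G (P (v n))) Filter.atTop (nhds (G (P v₀))) :=
    ((hG.continuous.tendsto (P v₀)).comp hPt)
  have hev : ∀ᶠ n in Filter.atTop, |G (P (v n)) - G (P v₀)| < ε/3 := by
    have := Metric.tendsto_atTop.mp hGPt (ε/3) (by positivity)
    obtain ⟨N, hN⟩ := this
    exact Filter.eventually_atTop.mpr ⟨N, fun n hn => by
      simpa [Real.dist_eq] using hN n hn⟩
  obtain ⟨N, hN⟩ := Filter.eventually_atTop.mp hev
  refine ⟨N, fun n hn => ?_⟩
  have h2 := hN n hn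
  have : |G (v n) - G v₀| < ε := by
    have := abs_sub_abs_le_abs_sub (G (v n)) (G v₀)
    calc |G (v n) - G v₀|
        ≤ |G (v n) - G (P (v n))| + |G (P (v n)) - G (P v₀)| + |G (P v₀) - G v₀| := by
          have := abs_sub_le (G (v n)) (G (P (v n))) (G v₀)
          have h3 := abs_sub_le (G (P (v n))) (G (P v₀)) (G v₀)
          linarith
      _ < ε/3 + ε/3 + ε/3 := by
          have h4 : |G (P v₀) - G v₀| ≤ ε/3 := by rw [abs_sub_comm]; exact h0
          linarith [h1 n]
      _ = ε := by ring
  simpa [Real.dist_eq] using this
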